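/- Let x_1, …, x_K be vectors in ℝ^d with ‖x_k‖₂ ≤ 1 for all k and with the linear span of {x_1, …, x_K} of dimension at most r. Let λ > 0 and B > 0 be real numbers, and for each k ∈ {1, …, K} set U_k = λ·I_d + ∑_{t<k} x_t x_tᵀ. Then ∑_{k=1}^{K} min{‖x_k‖_{U_k⁻¹}, √B} ≤ √((1 + B)·r·K·log(1 + K/λ)). -/

import Mathlib

open Matrix

section EPLAux

variable {d : ℕ}

private lemma epl_vecMulVec_mulVec (v y : Fin d → ℝ) :
    (vecMulVec v v) *ᵥ y = fun i => v i * (v ⬝ᵥ y) := by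
  ext i; simp [mulVec, vecMulVec_apply, dotProduct, mul_assoc, Finset.mul_sum]

private lemma epl_psd_vmv (v : Fin d → ℝ) : (vecMulVec v v).PosSemidef := by
  refine .of_dotProduct_mulVec_nonneg ?_ ?_
  · ext i j; simp [vecMulVec_apply, conjTranspose_apply, mul_comm]
  · intro y
    rw [epl_vecMulVec_mulVec]
    have h2 : star y ⬝ᵥ (fun i => v i * (v ⬝ᵥ y)) = (v ⬝ᵥ y) * (v ⬝ᵥ y) := by
      simp only [star_trivial, dotProduct]
      rw [Finset.sum_mul]
      exact Finset.sum_congr rfl (fun i _ => by ring)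
    rw [h2]
    exact mul_self_nonneg _

private lemma epl_detlem {A : Matrix (Fin d) (Fin d) ℝ} (hA : IsUnit A.det) (v : Fin d → ℝ) :
    (A + vecMulVec v v).det = A.det * (1 + v ⬝ᵥ A⁻¹ *ᵥ v) := by
  rw [vecMulVec_eq Unit, det_add_replicateCol_mul_replicateRow hA]
  congr 1
  rw [det_unique]
  simp [Matrix.mul_apply, Matrix.replicateRow, Matrix.replicateCol, mulVec, dotProduct, Finset.mul_sum, mul_comm,
    mul_assoc]
  rw [Finset.sum_comm]
  exact Finset.sum_congr rfl fun i _ => Finset.sum_congr rfl fun j _ => by ring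

private lemma epl_det_smul_one_add {S : Matrix (Fin d) (Fin d) ℝ} (hH : S.IsHermitian) (lam : ℝ) :
    (lam • (1 : Matrix (Fin d) (Fin d) ℝ) + S).det = ∏ i, (lam + hH.eigenvalues i) := by
  set V : Matrix (Fin d) (Fin d) ℝ := (hH.eigenvectorUnitary : Matrix (Fin d) (Fin d) ℝ) with hV
  have hVV : V * star V = 1 := (Matrix.mem_unitaryGroup_iff).mp (hH.eigenvectorUnitary).2
  have key : lam • (1 : Matrix (Fin d) (Fin d) ℝ) + S
      = V * (diagonal (fun i => lam + hH.eigenvalues i)) * star V := by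
    conv_lhs => rw [hH.spectral_theorem]
    have h1 : (diagonal fun i => lam + hH.eigenvalues i)
        = lam • 1 + diagonal (RCLike.ofReal ∘ hH.eigenvalues) := by
      rw [smul_one_eq_diagonal, diagonal_add]; rfl
    rw [h1, Matrix.mul_add, Matrix.add_mul]
    congr 1
    rw [Matrix.mul_smul, Matrix.mul_one, Matrix.smul_mul, hVV]
  rw [key, det_mul, det_mul, mul_right_comm, ← det_mul, hVV, det_one, one_mul, det_diagonal]

private lemma epl_sum_eigs_eq_trace {S : Matrix (Fin d) (Fin d) ℝ} (hH : S.IsHermitian) :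
    ∑ i, hH.eigenvalues i = S.trace := by
  set V : Matrix (Fin d) (Fin d) ℝ := (hH.eigenvectorUnitary : Matrix (Fin d) (Fin d) ℝ) with hV
  have hVV : star V * V = 1 := (Matrix.mem_unitaryGroup_iff').mp (hH.eigenvectorUnitary).2
  rw [hH.trace_eq_sum_eigenvalues]
  simp

private lemma epl_logdet_bound {r : ℕ} {S : Matrix (Fin d) (Fin d) ℝ} (hS : S.PosSemidef)
    {lam Kr : ℝ} (hlam : 0 < lam) (htr : S.trace ≤ Kr) (hrank : S.rank ≤ r) :
    Real.log ((lam • (1 : Matrix (Fin d) (Fin d) ℝ) + S).det)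
      ≤ d * Real.log lam + r * Real.log (1 + Kr / lam) := by
  have hH := hS.1
  have hnn : ∀ i, 0 ≤ hH.eigenvalues i := hS.eigenvalues_nonneg
  have hKr : (0:ℝ) ≤ Kr := le_trans (by
      rw [← epl_sum_eigs_eq_trace hH] at htr ⊢
      exact Finset.sum_nonneg fun i _ => hnn i) htr
  have hle : ∀ i, hH.eigenvalues i ≤ Kr := by
    intro i
    calc hH.eigenvalues i ≤ ∑ j, hH.eigenvalues j :=
          Finset.single_le_sum (fun j _ => hnn j) (Finset.mem_univ i)
      _ = S.trace := epl_sum_eigs_eq_trace hH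
      _ ≤ Kr := htr
  have hpos : ∀ i, 0 < lam + hH.eigenvalues i := fun i => by linarith [hnn i]
  rw [epl_det_smul_one_add hH, Real.log_prod (fun i _ => (hpos i).ne')]
  have hterm : ∀ i, Real.log (lam + hH.eigenvalues i)
      = Real.log lam + Real.log (1 + hH.eigenvalues i / lam) := by
    intro i
    rw [← Real.log_mul hlam.ne' (by have := hnn i; positivity), mul_add, mul_one,
      mul_div_cancel₀ _ hlam.ne']
  simp_rw [hterm]
  rw [Finset.sum_add_distrib, Finset.sum_const, Finset.card_univ, Fintype.card_fin, nsmul_eq_mul]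
  gcongr ?_ + ?_
  · exact le_refl _
  · have hzero : ∀ i ∈ Finset.univ \ Finset.univ.filter (fun i => hH.eigenvalues i ≠ 0),
        Real.log (1 + hH.eigenvalues i / lam) = 0 := by
      intro i hi
      simp only [Finset.mem_sdiff, Finset.mem_filter, not_and, not_not, Finset.mem_univ,
        true_implies, true_and] at hi
      rw [hi, zero_div, add_zero, Real.log_one]
    rw [← Finset.sum_subset (Finset.filter_subset _ _)
      (fun i _ hi => hzero i (Finset.mem_sdiff.mpr ⟨Finset.mem_univ i, hi⟩))]
    have hbound : ∀ i ∈ Finset.univ.filter (fun i => hH.eigenvalues i ≠ 0),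
        Real.log (1 + hH.eigenvalues i / lam) ≤ Real.log (1 + Kr / lam) := by
      intro i _
      apply Real.log_le_log (by have := hnn i; positivity)
      gcongr
      exact hle i
    calc ∑ i ∈ Finset.univ.filter (fun i => hH.eigenvalues i ≠ 0),
          Real.log (1 + hH.eigenvalues i / lam)
        ≤ (Finset.univ.filter (fun i => hH.eigenvalues i ≠ 0)).card • Real.log (1 + Kr / lam) :=
          Finset.sum_le_card_nsmul _ _ _ hbound
      _ = ((Finset.univ.filter (fun i => hH.eigenvalues i ≠ 0)).card : ℝ)
            * Real.log (1 + Kr / lam) := nsmul_eq_mul _ _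
      _ ≤ r * Real.log (1 + Kr / lam) := by
          apply mul_le_mul_of_nonneg_right _
            (Real.log_nonneg (le_add_of_nonneg_right (by positivity)))
          have hcard : (Finset.univ.filter (fun i => hH.eigenvalues i ≠ 0)).card
              = Fintype.card {i // hH.eigenvalues i ≠ 0} := (Fintype.card_subtype _).symm
          rw [hcard]
          exact_mod_cast (hH.rank_eq_card_non_zero_eigs ▸ hrank)

private lemma epl_min_le_log {u B : ℝ} (hu : 0 ≤ u) (hB : 0 < B) :
    min u B ≤ (1 + B) * Real.log (1 + u) := by
  have hlog : ∀ t : ℝ, 0 ≤ t → t / (1 + t) ≤ Real.log (1 + t) := by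
    intro t ht
    have h1t : (0:ℝ) < 1 + t := by linarith
    have := Real.log_le_sub_one_of_pos (x := 1 / (1 + t)) (by positivity)
    rw [Real.log_div one_ne_zero h1t.ne', Real.log_one, zero_sub] at this
    have h2 : 1 / (1 + t) - 1 = -(t / (1 + t)) := by field_simp; ring
    rw [h2] at this
    linarith
  rcases le_total u B with h | h
  · rw [min_eq_left h]
    have := hlog u hu
    have h1u : (0:ℝ) < 1 + u := by linarith
    have hfac : u ≤ (1 + B) * (u / (1 + u)) := by
      rw [mul_div_assoc']
      rw [le_div_iff₀ h1u]
      nlinarith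
    calc u ≤ (1 + B) * (u / (1 + u)) := hfac
      _ ≤ (1 + B) * Real.log (1 + u) := by
          apply mul_le_mul_of_nonneg_left (hlog u hu) (by linarith)
  · rw [min_eq_right h]
    have hBb := hlog B hB.le
    have h1B : (0:ℝ) < 1 + B := by linarith
    calc B = (1 + B) * (B / (1 + B)) := by field_simp
      _ ≤ (1 + B) * Real.log (1 + B) := by
          apply mul_le_mul_of_nonneg_left hBb (by linarith)
      _ ≤ (1 + B) * Real.log (1 + u) := by
          apply mul_le_mul_of_nonneg_left _ (by linarith)
          exact Real.log_le_log (by linarith) (by linarith)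

private lemma epl_rank_sum_le {K r : ℕ} (x : Fin K → Fin d → ℝ) (s : Finset (Fin K))
    (hx : Module.finrank ℝ (Submodule.span ℝ (Set.range x)) ≤ r) :
    (∑ t ∈ s, vecMulVec (x t) (x t)).rank ≤ r := by
  rw [Matrix.rank]
  refine le_trans (Submodule.finrank_mono ?_) hx
  rintro _ ⟨v, rfl⟩
  have : (∑ t ∈ s, vecMulVec (x t) (x t)).mulVecLin v
      = ∑ t ∈ s, (x t ⬝ᵥ v) • x t := by
    rw [mulVecLin_apply]
    rw [show ((∑ t ∈ s, vecMulVec (x t) (x t)) *ᵥ v) = ∑ t ∈ s, (vecMulVec (x t) (x t)) *ᵥ v from by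
      induction s using Finset.induction with
      | empty => simp
      | insert a s h ih => rw [Finset.sum_insert h, Finset.sum_insert h, add_mulVec, ih]]
    refine Finset.sum_congr rfl fun t _ => ?_
    rw [epl_vecMulVec_mulVec]
    ext i
    simp [mul_comm]
  rw [this]
  exact Submodule.sum_mem _ fun t _ =>
    Submodule.smul_mem _ _ (Submodule.subset_span ⟨t, rfl⟩)

end EPLAux

/-- elliptical potential lemma, unsquared version: for unit-bounded
vectors `x_1, …, x_K` of span dimension at most `r`, with
`U_k = λ I + ∑_{t<k} x_t x_tᵀ`,
`∑_{k} min{‖x_k‖_{U_k⁻¹}, √B} ≤ √((1 + B) r K log(1 + K/λ))`. -/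
theorem elliptical_potential_sqrt
    {d r K : ℕ} (lam B : ℝ) (hlam : 0 < lam) (hB : 0 < B)
    (x : Fin K → (Fin d → ℝ))
    (hnorm : ∀ k, Real.sqrt (∑ c, (x k c) ^ 2) ≤ 1)
    (hx : Module.finrank ℝ (Submodule.span ℝ (Set.range x)) ≤ r)
    (U : Fin K → Matrix (Fin d) (Fin d) ℝ)
    (hU : ∀ k, U k = lam • (1 : Matrix (Fin d) (Fin d) ℝ)
        + ∑ t ∈ Finset.univ.filter (fun t => t < k), vecMulVec (x t) (x t)) :
    ∑ k, min (Real.sqrt (x k ⬝ᵥ (U k)⁻¹.mulVec (x k))) (Real.sqrt B)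
      ≤ Real.sqrt ((1 + B) * r * K * Real.log (1 + K / lam)) := by
  classical
  -- the matrices W n for natural cutoffs n
  set S : ℕ → Matrix (Fin d) (Fin d) ℝ :=
    fun n => ∑ t ∈ Finset.univ.filter (fun t : Fin K => (t : ℕ) < n), vecMulVec (x t) (x t)
    with hS
  set W : ℕ → Matrix (Fin d) (Fin d) ℝ :=
    fun n => lam • (1 : Matrix (Fin d) (Fin d) ℝ) + S n with hW
  have hSpsd : ∀ n, (S n).PosSemidef := by
    intro n
    rw [hS]
    refine Finset.sum_induction _ _ (fun a b ha hb => ha.add hb) Matrix.PosSemidef.zero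
      (fun t _ => epl_psd_vmv (x t))
  have hWpd : ∀ n, (W n).PosDef := by
    intro n
    apply Matrix.PosDef.add_posSemidef _ (hSpsd n)
    rw [smul_one_eq_diagonal]
    exact Matrix.PosDef.diagonal (fun _ => hlam)
  have hdetpos : ∀ n, 0 < (W n).det := fun n => (hWpd n).det_pos
  have hWU : ∀ k : Fin K, U k = W k.val := by
    intro k
    rw [hU k, hW, hS]
    congr 2
  -- the quadratic forms
  set u : Fin K → ℝ := fun k => x k ⬝ᵥ (W k.val)⁻¹ *ᵥ (x k) with hu
  have hunn : ∀ k, 0 ≤ u k := by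
    intro k
    have hinv : ((W k.val)⁻¹).PosSemidef := ((hWpd k.val).inv).posSemidef
    simpa using hinv.dotProduct_mulVec_nonneg (x k)
  -- step identity
  have hstep : ∀ k : Fin K, W (k.val + 1) = W k.val + vecMulVec (x k) (x k) := by
    intro k
    simp only [hW, hS]
    have hfil : Finset.univ.filter (fun t : Fin K => (t : ℕ) < k.val + 1)
        = insert k (Finset.univ.filter (fun t : Fin K => (t : ℕ) < k.val)) := by
      ext t
      simp only [Finset.mem_filter, Finset.mem_univ, true_and, Finset.mem_insert,
        Nat.lt_succ_iff_lt_or_eq]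
      constructor
      · rintro (h | h)
        · exact Or.inr h
        · exact Or.inl (Fin.ext h)
      · rintro (h | h)
        · exact Or.inr (by rw [h])
        · exact Or.inl h
    have hk : k ∉ Finset.univ.filter (fun t : Fin K => (t : ℕ) < k.val) := by simp
    rw [hfil, Finset.sum_insert hk]
    simp only [add_comm (vecMulVec (x k) (x k)) _, add_assoc]
  have hlogstep : ∀ k : Fin K,
      Real.log ((W (k.val + 1)).det) - Real.log ((W k.val).det) = Real.log (1 + u k) := by
    intro k
    rw [hstep k, epl_detlem (isUnit_iff_ne_zero.mpr (hdetpos k.val).ne') (x k),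
      Real.log_mul (hdetpos k.val).ne' (by have := hunn k; positivity)]
    ring
  -- telescoping
  set f : ℕ → ℝ := fun n => Real.log ((W n).det) with hf
  have htel : ∑ k : Fin K, Real.log (1 + u k) = f K - f 0 := by
    have h1 : ∑ k : Fin K, Real.log (1 + u k) = ∑ k : Fin K, (f (k.val + 1) - f k.val) := by
      refine Finset.sum_congr rfl fun k _ => (hlogstep k).symm
    rw [h1]
    rw [show (∑ k : Fin K, (f (k.val + 1) - f k.val))
        = ∑ n ∈ Finset.range K, (f (n + 1) - f n) from
      Fin.sum_univ_eq_sum_range (fun n => f (n + 1) - f n) K]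
    exact Finset.sum_range_sub f K
  -- f 0 and f K
  have hW0 : W 0 = lam • (1 : Matrix (Fin d) (Fin d) ℝ) := by
    rw [hW, hS]
    simp
  have hf0 : f 0 = d * Real.log lam := by
    show Real.log ((W 0).det) = d * Real.log lam
    rw [hW0, smul_one_eq_diagonal, det_diagonal]
    simp [Real.log_pow]
  have htrace : (S K).trace ≤ (K : ℝ) := by
    rw [hS]
    have h1 : (∑ t ∈ Finset.univ.filter (fun t : Fin K => (t : ℕ) < K),
        vecMulVec (x t) (x t)).trace
        = ∑ t ∈ Finset.univ.filter (fun t : Fin K => (t : ℕ) < K), ∑ c, (x t c) ^ 2 := by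
      rw [Matrix.trace_sum]
      refine Finset.sum_congr rfl fun t _ => ?_
      simp [Matrix.trace, Matrix.diag, vecMulVec_apply, sq]
    rw [h1]
    calc ∑ t ∈ Finset.univ.filter (fun t : Fin K => (t : ℕ) < K), ∑ c, (x t c) ^ 2
        ≤ ∑ _t ∈ Finset.univ.filter (fun t : Fin K => (t : ℕ) < K), (1:ℝ) := by
          refine Finset.sum_le_sum fun t _ => ?_
          have h2 := hnorm t
          have hs : (0:ℝ) ≤ ∑ c, (x t c) ^ 2 := Finset.sum_nonneg fun c _ => sq_nonneg _
          nlinarith [Real.sq_sqrt hs, Real.sqrt_nonneg (∑ c, (x t c) ^ 2)]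
      _ ≤ (K : ℝ) := by
          rw [Finset.sum_const, nsmul_eq_mul, mul_one]
          have hc : (Finset.univ.filter (fun t : Fin K => (t : ℕ) < K)).card ≤ K :=
            (Finset.card_filter_le _ _).trans (le_of_eq (by simp))
          exact_mod_cast hc
  have hfK : f K ≤ d * Real.log lam + r * Real.log (1 + K / lam) :=
    epl_logdet_bound (hSpsd K) hlam htrace (epl_rank_sum_le x _ hx)
  have hT : ∑ k : Fin K, Real.log (1 + u k) ≤ r * Real.log (1 + K / lam) := by
    rw [htel, hf0]; linarith
  -- rewrite the goal using W
  have hgoal : ∀ k : Fin K,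
      min (Real.sqrt (x k ⬝ᵥ (U k)⁻¹.mulVec (x k))) (Real.sqrt B)
      = Real.sqrt (min (u k) B) := by
    intro k
    rw [hWU k]
    rcases le_total (u k) B with h | h
    · rw [min_eq_left h, min_eq_left (Real.sqrt_le_sqrt h)]
    · rw [min_eq_right h, min_eq_right (Real.sqrt_le_sqrt h)]
  simp_rw [hgoal]
  -- Cauchy–Schwarz and the potential bound
  have hmin_nn : ∀ k : Fin K, 0 ≤ min (u k) B := fun k => le_min (hunn k) hB.le
  have hsum_nn : 0 ≤ ∑ k : Fin K, Real.sqrt (min (u k) B) :=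
    Finset.sum_nonneg fun k _ => Real.sqrt_nonneg _
  have hlognn : 0 ≤ Real.log (1 + K / lam) :=
    Real.log_nonneg (le_add_of_nonneg_right (by positivity))
  rw [Real.le_sqrt hsum_nn (mul_nonneg (by positivity) hlognn)]
  calc (∑ k : Fin K, Real.sqrt (min (u k) B)) ^ 2
      ≤ (Finset.univ : Finset (Fin K)).card * ∑ k : Fin K, Real.sqrt (min (u k) B) ^ 2 :=
        sq_sum_le_card_mul_sum_sq
    _ = K * ∑ k : Fin K, min (u k) B := by
        rw [Finset.card_univ, Fintype.card_fin]
        congr 1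
        refine Finset.sum_congr rfl fun k _ => Real.sq_sqrt (hmin_nn k)
    _ ≤ K * ((1 + B) * ∑ k : Fin K, Real.log (1 + u k)) := by
        apply mul_le_mul_of_nonneg_left _ (Nat.cast_nonneg K)
        rw [Finset.mul_sum]
        exact Finset.sum_le_sum fun k _ => epl_min_le_log (hunn k) hB
    _ ≤ K * ((1 + B) * (r * Real.log (1 + K / lam))) := by
        apply mul_le_mul_of_nonneg_left _ (Nat.cast_nonneg K)
        exact mul_le_mul_of_nonneg_left hT (by linarith)
    _ = (1 + B) * r * K * Real.log (1 + K / lam) := by ring
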